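/- Let n ≥ 1. Then, as formal power series in q_1, q_2: (q_1;q_1)_n (q_2;q_2)_n · Σ_{S = (s^1,…,s^n) ∈ (ℕ^2)^n with s^1 ≤ s^2 ≤ ⋯ ≤ s^n lexicographically} q^S = Σ_{σ ∈ S_n} q_1^{comaj(σ^{−1})} q_2^{comaj(σ)}. Consequently, setting q_1 = q_2 = q, ((q;q)_n)^2 · Σ_{S with s^1 ≤ ⋯ ≤ s^n} q^{|S|} = Σ_{σ ∈ S_n} q^{comaj(σ) + comaj(σ^{−1})}, where |S| is the sum of all entries of S. (The latter is the graded multiplicity of the trivial representation — equivalently of s_n — in H_n^{⊗2}.) -/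

import Mathlib

open scoped Classical

namespace RomeroComaj

noncomputable section

/-- `Seq r` is `ℕ^r`, the type of sequences of natural numbers of length `r`. -/
abbrev Seq (r : ℕ) := Fin r → ℕ

/-- strict lexicographic order on `ℕ^r`. -/
def lexLt {r : ℕ} (a b : Seq r) : Prop :=
  ∃ i : Fin r, (∀ j : Fin r, j < i → a j = b j) ∧ a i < b i

/-- weak lexicographic order on `ℕ^r`. -/
def lexLe {r : ℕ} (a b : Seq r) : Prop :=
  lexLt a b ∨ a = b

/-- `RNbr R a b` : the (1-indexed) indices `a` and `b` are `R`-neighbors,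
i.e. (for `a < b`) all of `a, a+1, …, b-1` lie in `R`. -/
def RNbr (R : Finset ℕ) (a b : ℕ) : Prop :=
  ∀ t ∈ Finset.Ico (min a b) (max a b), t ∈ R

/-- the value `σ_i` of the one-line notation of `σ`, both position `i` and
the value being 1-indexed (junk value `0` outside `1 ≤ i ≤ n`). -/
def pget {n : ℕ} (σ : Equiv.Perm (Fin n)) (i : ℕ) : ℕ :=
  if h : i - 1 < n then (σ ⟨i - 1, h⟩).val + 1 else 0

/-- the sequence `s^i` of a list `S = (s^1, …, s^n)`, `i` being 1-indexed. -/
def sget {n r : ℕ} (S : Fin n → Seq r) (i : ℕ) : Seq r :=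
  if h : i - 1 < n then S ⟨i - 1, h⟩ else 0

/-- the condition for `i` to belong to `Des_{R,S}(σ)`:
`s^{σ_i} > s^{σ_{i+1}} − χ(σ_{i+1} < σ_i ∧ σ_{i+1} ≁_R σ_i) − χ(σ_{i+1} > σ_i ∧ σ_i ∼_R σ_{i+1})`. -/
def desCond {n r : ℕ} (R : Finset ℕ) (S : Fin n → Seq r) (σ : Equiv.Perm (Fin n)) (i : ℕ) :
    Prop :=
  if (pget σ (i+1) < pget σ i ∧ ¬ RNbr R (pget σ (i+1)) (pget σ i)) ∨
      (pget σ i < pget σ (i+1) ∧ RNbr R (pget σ i) (pget σ (i+1)))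
  then lexLe (sget S (pget σ (i+1))) (sget S (pget σ i))
  else lexLt (sget S (pget σ (i+1))) (sget S (pget σ i))

/-- `Des_{R,S}(σ) ⊆ {1, …, n−1}` (1-indexed positions). -/
def DesSet {n r : ℕ} (R : Finset ℕ) (S : Fin n → Seq r) (σ : Equiv.Perm (Fin n)) : Finset ℕ :=
  (Finset.Icc 1 (n-1)).filter (fun i => desCond R S σ i)

/-- `Comaj_{R,S}(σ) = ∑_{i ∈ Des_{R,S}(σ)} (n − i)`. -/
def Comaj {n r : ℕ} (R : Finset ℕ) (S : Fin n → Seq r) (σ : Equiv.Perm (Fin n)) : ℕ :=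
  ∑ i ∈ DesSet R S σ, (n - i)

/-- `s^i` is read before `s^j` in the reading order of `S` (with respect to `R`);
`i, j` are 1-indexed. -/
def readBefore {n r : ℕ} (R : Finset ℕ) (S : Fin n → Seq r) (i j : ℕ) : Prop :=
  lexLt (sget S i) (sget S j) ∨
    (sget S i = sget S j ∧ ((i < j ∧ ¬ RNbr R i j) ∨ (j < i ∧ RNbr R j i)))

/-- `IsReading R S σ` says that the reading permutation `σ_R(S)` equals `σ`,
i.e. `σ` lists `1, …, n` in the reading order of `S`. -/
def IsReading {n r : ℕ} (R : Finset ℕ) (S : Fin n → Seq r) (σ : Equiv.Perm (Fin n)) : Prop :=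
  ∀ i ∈ Finset.Icc 1 (n-1), readBefore R S (pget σ i) (pget σ (i+1))

/-- the operator `Z_{R,σ} : (ℕ^r)^n → (ℕ^{r+1})^n`, prepending to `s^v` the number of
descents of `σ` (w.r.t. `R, S`) at positions strictly before the position of `v` in `σ`. -/
def Zop {n r : ℕ} (R : Finset ℕ) (σ : Equiv.Perm (Fin n)) (S : Fin n → Seq r) :
    Fin n → Seq (r+1) :=
  fun v => Fin.cons ((DesSet R S σ ∩ Finset.Ico 1 ((σ.symm v).val + 1)).card) (S v)

/-- `Zvec R σs i = Z_{R,σ^i} ⋯ Z_{R,σ^1}(∅)` where `σ^{j+1} = σs j`. -/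
def Zvec {n : ℕ} (R : Finset ℕ) (σs : ℕ → Equiv.Perm (Fin n)) : (i : ℕ) → Fin n → Seq i
  | 0 => fun _ => (0 : Seq 0)
  | (i+1) => Zop R (σs i) (Zvec R σs i)

/-- extend a finite vector of permutations to `ℕ`, by the identity. -/
def extFun {n r : ℕ} (σv : Fin r → Equiv.Perm (Fin n)) : ℕ → Equiv.Perm (Fin n) :=
  fun j => if h : j < r then σv ⟨j, h⟩ else 1

/-- `comajI R k σv i = comaj^i_R(σ⃗)` for `1 ≤ i ≤ k`, where `σ⃗ = σv` has length `k−1`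
and `σ^k = ε`. -/
def comajI {n : ℕ} (R : Finset ℕ) (k : ℕ) (σv : Fin (k-1) → Equiv.Perm (Fin n)) (i : ℕ) : ℕ :=
  Comaj R (Zvec R (extFun σv) (i-1)) (extFun σv (i-1))

/-- the exponent of the monomial `q^S` for `S ∈ (ℕ^r)^n` : the (0-indexed) variable `i`
(that is, `q_{i+1}`) records the `(r−i)`-th (0-indexed: `r−1−i`-th) coordinates. -/
def expOf {n r : ℕ} (S : Fin n → Seq r) : Fin r →₀ ℕ :=
  Finsupp.equivFunOnFinite.symm (fun i => ∑ j : Fin n, S j (Fin.rev i))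

/-- the formal power series whose coefficient at a monomial `d` counts the elements
`a : α` satisfying `P a d`. -/
def countSeriesP {σty α : Type*} (P : α → (σty →₀ ℕ) → Prop) : MvPowerSeries σty ℤ :=
  fun d => (Nat.card {a : α // P a d} : ℤ)

/-- `∑_{S ∈ (ℕ^r)^n, P S} q^S`. -/
def countSeries {n r : ℕ} (P : (Fin n → Seq r) → Prop) : MvPowerSeries (Fin r) ℤ :=
  countSeriesP (fun S d => P S ∧ expOf S = d)

/-- the Pochhammer factor `(q_i; q_i)_n = ∏_{j=1}^n (1 − q_i^j)`. -/
def pochOne {r : ℕ} (n : ℕ) (i : Fin r) : MvPowerSeries (Fin r) ℤ :=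
  ∏ j ∈ Finset.Icc 1 n, (1 - (MvPowerSeries.X i : MvPowerSeries (Fin r) ℤ) ^ j)

/-- `∏_{i=1}^{r} (q_i; q_i)_n`. -/
def pochAll (n r : ℕ) : MvPowerSeries (Fin r) ℤ :=
  ∏ i : Fin r, pochOne n i

/-- the exponent of `q_1^{comaj¹_R(σ⃗)} ⋯ q_k^{comaj^k_R(σ⃗)}`. -/
def comajExp {n : ℕ} (R : Finset ℕ) (k : ℕ) (σv : Fin (k-1) → Equiv.Perm (Fin n)) :
    Fin k →₀ ℕ :=
  Finsupp.equivFunOnFinite.symm (fun i => comajI R k σv (i.val + 1))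

/-- A standard Young tableau of shape `μ` (with `μ.card` cells), recorded by the
position `pos i` of each (1-indexed) entry `i ∈ {1, …, μ.card}`; entries increase
left-to-right along rows and down columns (matrix convention), and `pos` is a
bijection from `{1, …, μ.card}` onto the cells of `μ` (normalized by `0` outside). -/
structure SYT (μ : YoungDiagram) where
  pos : ℕ → ℕ × ℕ
  mem : ∀ i ∈ Finset.Icc 1 μ.card, pos i ∈ μ
  inj : ∀ i ∈ Finset.Icc 1 μ.card, ∀ j ∈ Finset.Icc 1 μ.card, pos i = pos j → i = j
  surj : ∀ c ∈ μ, ∃ i ∈ Finset.Icc 1 μ.card, pos i = c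
  row_inc : ∀ i ∈ Finset.Icc 1 μ.card, ∀ j ∈ Finset.Icc 1 μ.card,
    (pos i).1 = (pos j).1 → (pos i).2 < (pos j).2 → i < j
  col_inc : ∀ i ∈ Finset.Icc 1 μ.card, ∀ j ∈ Finset.Icc 1 μ.card,
    (pos i).2 = (pos j).2 → (pos i).1 < (pos j).1 → i < j
  junk : ∀ i, i ∉ Finset.Icc 1 μ.card → pos i = 0

/-- `des(T)` : the set of `i ∈ {1, …, n−1}` such that `i+1` lies in a strictly
higher row of `T` than `i` (in matrix convention: a strictly larger row index). -/
def desSYT {μ : YoungDiagram} (T : SYT μ) : Finset ℕ :=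
  (Finset.Icc 1 (μ.card - 1)).filter (fun i => (T.pos i).1 < (T.pos (i+1)).1)

/-- the ordinary descent set `des(π) = {i : π_i > π_{i+1}}` (1-indexed). -/
def desPerm {n : ℕ} (π : Equiv.Perm (Fin n)) : Finset ℕ :=
  (Finset.Icc 1 (n-1)).filter (fun i => pget π (i+1) < pget π i)

/-- `comaj(π) = ∑_{i ∈ des(π)} (n − i)`. -/
def comajP {n : ℕ} (π : Equiv.Perm (Fin n)) : ℕ :=
  ∑ i ∈ desPerm π, (n - i)



/-! ### Counting core -/

/-- adjacent-monotonicity condition with strictness forced at 1-indexed positions in `D`. -/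
def okD (n : ℕ) (D : Finset ℕ) (a : Fin n → ℕ) : Prop :=
  ∀ i : ℕ, ∀ h : i + 1 < n,
    a ⟨i, Nat.lt_of_succ_lt h⟩ ≤ a ⟨i + 1, h⟩ ∧
      (i + 1 ∈ D → a ⟨i, Nat.lt_of_succ_lt h⟩ < a ⟨i + 1, h⟩)

lemma finite_of_sum_le {n m : ℕ} (P : (Fin n → ℕ) → Prop)
    (hP : ∀ a, P a → ∑ i, a i ≤ m) : Finite {a : Fin n → ℕ // P a} := by
  have key : ∀ (x : {a : Fin n → ℕ // P a}) (i : Fin n), x.1 i < m + 1 := by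
    intro x i
    have h1 : x.1 i ≤ ∑ j, x.1 j :=
      Finset.single_le_sum (fun j _ => Nat.zero_le _) (Finset.mem_univ i)
    have h2 := hP x.1 x.2
    omega
  apply Finite.of_injective (fun x : {a : Fin n → ℕ // P a} =>
    (fun i => (⟨x.1 i, key x i⟩ : Fin (m + 1)) : Fin n → Fin (m + 1)))
  intro x y hxy
  apply Subtype.ext; funext i
  exact congrArg Fin.val (congrFun hxy i)

lemma finite_cnt (n m : ℕ) (D : Finset ℕ) :
    Finite {a : Fin n → ℕ // okD n D a ∧ ∑ i, a i = m} :=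
  finite_of_sum_le _ (fun a ha => ha.2.le)

/-- number of sequences compatible with `D` with sum `m`. -/
def cnt (n : ℕ) (D : Finset ℕ) (m : ℕ) : ℕ :=
  Nat.card {a : Fin n → ℕ // okD n D a ∧ ∑ i, a i = m}

def Fser (n : ℕ) (D : Finset ℕ) : PowerSeries ℤ := PowerSeries.mk fun m => (cnt n D m : ℤ)

def pochPS (n : ℕ) : PowerSeries ℤ :=
  ∏ j ∈ Finset.Icc 1 n, (1 - (PowerSeries.X : PowerSeries ℤ) ^ j)

lemma okD_le {n : ℕ} {D : Finset ℕ} {a : Fin n → ℕ} (ha : okD n D a) :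
    ∀ (k : ℕ) (hk : k < n) (j : ℕ) (hj : j ≤ k), a ⟨j, lt_of_le_of_lt hj hk⟩ ≤ a ⟨k, hk⟩ := by
  intro k
  induction k with
  | zero =>
    intro hk j hj
    have : j = 0 := by omega
    subst this; exact le_rfl
  | succ k ih =>
    intro hk j hj
    rcases Nat.lt_or_ge j (k + 1) with h | h
    · have h1 : j ≤ k := by omega
      have h2 : k < n := by omega
      exact le_trans (ih h2 j h1) (ha k hk).1
    · have : j = k + 1 := by omega
      subst this; exact le_rfl

lemma okD_empty_adj {n : ℕ} {a : Fin n → ℕ}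
    (h : ∀ i : ℕ, ∀ h : i + 1 < n, a ⟨i, Nat.lt_of_succ_lt h⟩ ≤ a ⟨i + 1, h⟩) :
    okD n ∅ a :=
  fun i hi => ⟨h i hi, fun hmem => absurd hmem (Finset.notMem_empty _)⟩

lemma cnt_zero (D : Finset ℕ) (m : ℕ) : cnt 0 D m = if m = 0 then 1 else 0 := by
  rcases eq_or_ne m 0 with rfl | hm
  · rw [if_pos rfl]
    have : Unique {a : Fin 0 → ℕ // okD 0 D a ∧ ∑ i, a i = 0} := by
      refine ⟨⟨⟨fun i => i.elim0, ?_, by simp⟩⟩, ?_⟩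
      · intro i hi; omega
      · intro x; apply Subtype.ext; funext i; exact i.elim0
    exact Nat.card_unique
  · rw [if_neg hm]
    have : IsEmpty {a : Fin 0 → ℕ // okD 0 D a ∧ ∑ i, a i = m} := by
      constructor; rintro ⟨a, -, hsum⟩
      simp at hsum; omega
    exact Nat.card_of_isEmpty

/-- forward map: split by whether the first entry is `0`. -/
def recTo (n m : ℕ) (x : {a : Fin (n+1) → ℕ // okD (n+1) ∅ a ∧ ∑ i, a i = m}) :
    ({a : Fin n → ℕ // okD n ∅ a ∧ ∑ i, a i = m} ⊕
      {a : Fin (n+1) → ℕ // okD (n+1) ∅ a ∧ (∑ i, a i) + (n+1) = m}) :=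
  if h : x.1 0 = 0 then
    Sum.inl ⟨fun i => x.1 i.succ, by
      apply okD_empty_adj
      intro i hi
      exact (x.2.1 (i+1) (by omega)).1, by
      have hs := x.2.2
      rw [Fin.sum_univ_succ, h, zero_add] at hs
      exact hs⟩
  else
    Sum.inr ⟨fun i => x.1 i - 1, by
      apply okD_empty_adj
      intro i hi
      have := (x.2.1 i hi).1
      omega, by
      have hone : ∀ i : Fin (n+1), 1 ≤ x.1 i := by
        intro i
        have h0 : x.1 ⟨0, Nat.succ_pos n⟩ ≤ x.1 ⟨i.val, i.isLt⟩ :=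
          okD_le x.2.1 i.val i.isLt 0 (Nat.zero_le _)
        have : x.1 0 ≠ 0 := h
        have he : x.1 ⟨0, Nat.succ_pos n⟩ = x.1 0 := rfl
        have he2 : x.1 ⟨i.val, i.isLt⟩ = x.1 i := rfl
        omega
      show (∑ i : Fin (n+1), (x.1 i - 1)) + (n+1) = m
      have hsum : ∑ i : Fin (n+1), (x.1 i - 1 + 1) = ∑ i : Fin (n+1), x.1 i :=
        Finset.sum_congr rfl (fun i _ => by have := hone i; omega)
      rw [Finset.sum_add_distrib] at hsum
      simp only [Finset.sum_const, Finset.card_univ, Fintype.card_fin, smul_eq_mul,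
        mul_one] at hsum
      have := x.2.2
      omega⟩

/-- backward map. -/
def recFrom (n m : ℕ)
    (y : ({a : Fin n → ℕ // okD n ∅ a ∧ ∑ i, a i = m} ⊕
      {a : Fin (n+1) → ℕ // okD (n+1) ∅ a ∧ (∑ i, a i) + (n+1) = m})) :
    {a : Fin (n+1) → ℕ // okD (n+1) ∅ a ∧ ∑ i, a i = m} :=
  match y with
  | Sum.inl a' => ⟨Fin.cons 0 a'.1, by
      apply okD_empty_adj
      intro i hi
      rcases Nat.eq_zero_or_pos i with rfl | hpos
      · have h0 : (⟨0, Nat.lt_of_succ_lt hi⟩ : Fin (n+1)) = 0 := rfl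
        rw [h0, Fin.cons_zero]
        exact Nat.zero_le _
      · obtain ⟨k, rfl⟩ := Nat.exists_eq_succ_of_ne_zero (Nat.pos_iff_ne_zero.mp hpos)
        have h1 : (⟨k+1, Nat.lt_of_succ_lt hi⟩ : Fin (n+1)) = Fin.succ ⟨k, by omega⟩ := rfl
        have h2 : (⟨k+1+1, hi⟩ : Fin (n+1)) = Fin.succ ⟨k+1, by omega⟩ := rfl
        rw [h1, h2, Fin.cons_succ, Fin.cons_succ]
        exact (a'.2.1 k (by omega)).1, by
      rw [Fin.sum_univ_succ, Fin.cons_zero, zero_add]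
      simpa using a'.2.2⟩
  | Sum.inr a => ⟨fun i => a.1 i + 1, by
      apply okD_empty_adj
      intro i hi
      have := (a.2.1 i hi).1
      omega, by
      show (∑ i : Fin (n+1), (a.1 i + 1)) = m
      rw [Finset.sum_add_distrib]
      simp only [Finset.sum_const, Finset.card_univ, Fintype.card_fin, smul_eq_mul, mul_one]
      exact a.2.2⟩

/-- the recurrence equivalence. -/
def recEquiv (n m : ℕ) :
    {a : Fin (n+1) → ℕ // okD (n+1) ∅ a ∧ ∑ i, a i = m} ≃
      ({a : Fin n → ℕ // okD n ∅ a ∧ ∑ i, a i = m} ⊕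
        {a : Fin (n+1) → ℕ // okD (n+1) ∅ a ∧ (∑ i, a i) + (n+1) = m}) where
  toFun := recTo n m
  invFun := recFrom n m
  left_inv := by
    intro x
    by_cases h : x.1 0 = 0
    · rw [recTo, dif_pos h]
      apply Subtype.ext; funext i
      show (Fin.cons 0 (fun i => x.1 i.succ) : Fin (n+1) → ℕ) i = x.1 i
      refine Fin.cases ?_ ?_ i
      · rw [Fin.cons_zero]; exact h.symm
      · intro j; rw [Fin.cons_succ]
    · rw [recTo, dif_neg h]
      apply Subtype.ext; funext i
      show (x.1 i - 1) + 1 = x.1 i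
      have h0 : x.1 ⟨0, Nat.succ_pos n⟩ ≤ x.1 ⟨i.val, i.isLt⟩ :=
        okD_le x.2.1 i.val i.isLt 0 (Nat.zero_le _)
      have : x.1 0 ≠ 0 := h
      have he : x.1 ⟨0, Nat.succ_pos n⟩ = x.1 0 := rfl
      have he2 : x.1 ⟨i.val, i.isLt⟩ = x.1 i := rfl
      omega
  right_inv := by
    intro y
    match y with
    | Sum.inl a' =>
      have hc : (Fin.cons 0 a'.1 : Fin (n+1) → ℕ) 0 = 0 := rfl
      rw [recFrom, recTo, dif_pos hc]
      apply congrArg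
      apply Subtype.ext; funext i
      show (Fin.cons 0 a'.1 : Fin (n+1) → ℕ) i.succ = a'.1 i
      rw [Fin.cons_succ]
    | Sum.inr a =>
      have hc : ¬ ((Fin.cons 0 ((fun i : Fin n => (0:ℕ))) : Fin (n+1) → ℕ) 0 = 1) := by simp
      have hc2 : ¬ ((fun i => a.1 i + 1) (0 : Fin (n+1)) = 0) := by simp
      rw [recFrom, recTo, dif_neg hc2]
      apply congrArg
      apply Subtype.ext; funext i
      show (a.1 i + 1) - 1 = a.1 i
      omega

lemma cnt_rec (n m : ℕ) :
    cnt (n+1) ∅ m = cnt n ∅ m + (if n + 1 ≤ m then cnt (n+1) ∅ (m - (n+1)) else 0) := by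
  haveI f1 : Finite {a : Fin n → ℕ // okD n ∅ a ∧ ∑ i, a i = m} := finite_cnt n m ∅
  haveI f2 : Finite {a : Fin (n+1) → ℕ // okD (n+1) ∅ a ∧ (∑ i, a i) + (n+1) = m} :=
    finite_of_sum_le (m := m) _ (fun a ha => by have := ha.2; omega)
  rw [cnt, Nat.card_congr (recEquiv n m), Nat.card_sum]
  congr 1
  rcases le_or_gt (n+1) m with h | h
  · rw [if_pos h, cnt]
    exact Nat.card_congr (Equiv.subtypeEquivRight (fun a => by
      constructor
      · rintro ⟨h1, h2⟩; exact ⟨h1, by omega⟩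
      · rintro ⟨h1, h2⟩; exact ⟨h1, by omega⟩))
  · rw [if_neg (by omega)]
    have : IsEmpty {a : Fin (n+1) → ℕ // okD (n+1) ∅ a ∧ (∑ i, a i) + (n+1) = m} := by
      constructor; rintro ⟨a, -, hsum⟩; omega
    exact Nat.card_of_isEmpty

lemma poch_mul_Fser_empty (n : ℕ) : pochPS n * Fser n ∅ = 1 := by
  induction n with
  | zero =>
    have h1 : pochPS 0 = 1 := by
      rw [pochPS, Finset.Icc_eq_empty (by omega), Finset.prod_empty]
    rw [h1, one_mul]
    ext m
    rw [Fser, PowerSeries.coeff_mk, PowerSeries.coeff_one, cnt_zero]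
    split <;> simp
  | succ n ih =>
    have hstep : (1 - PowerSeries.X ^ (n+1)) * Fser (n+1) ∅ = Fser n ∅ := by
      ext m
      rw [sub_mul, one_mul, map_sub, PowerSeries.coeff_X_pow_mul']
      rw [Fser, Fser, PowerSeries.coeff_mk, PowerSeries.coeff_mk, cnt_rec n m]
      split <;> rw [PowerSeries.coeff_mk] <;> push_cast <;> ring
    have hpoch : pochPS (n+1) = pochPS n * (1 - PowerSeries.X ^ (n+1)) := by
      rw [pochPS, pochPS, Finset.prod_Icc_succ_top (by omega)]
    rw [hpoch, mul_assoc, hstep, ih]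

/-- cumulated number of descent positions up to `i`. -/
def shiftF (D : Finset ℕ) (n : ℕ) (i : Fin n) : ℕ := ∑ p ∈ D, (if p ≤ i.val then 1 else 0)

lemma shiftF_zero {n : ℕ} {D : Finset ℕ} (hD : D ⊆ Finset.Icc 1 (n-1)) (h0 : 0 < n) :
    shiftF D n ⟨0, h0⟩ = 0 := by
  apply Finset.sum_eq_zero
  intro p hp
  have := Finset.mem_Icc.mp (hD hp)
  rw [show ((⟨0, h0⟩ : Fin n) : ℕ) = 0 from rfl, if_neg (by omega)]

lemma shiftF_succ {n : ℕ} (D : Finset ℕ) (i : ℕ) (h : i + 1 < n) :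
    shiftF D n ⟨i+1, h⟩ =
      shiftF D n ⟨i, Nat.lt_of_succ_lt h⟩ + (if (i+1) ∈ D then 1 else 0) := by
  rw [shiftF, shiftF]
  have : ∀ p ∈ D, (if p ≤ i + 1 then (1:ℕ) else 0) =
      (if p ≤ i then 1 else 0) + (if p = i + 1 then 1 else 0) := by
    intro p _; split_ifs <;> omega
  rw [Finset.sum_congr rfl this, Finset.sum_add_distrib, Finset.sum_ite_eq' D (i+1) (fun _ => 1)]

lemma shiftF_sum {n : ℕ} {D : Finset ℕ} (hD : D ⊆ Finset.Icc 1 (n-1)) :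
    ∑ i : Fin n, shiftF D n i = ∑ p ∈ D, (n - p) := by
  rw [show (∑ i : Fin n, shiftF D n i) = ∑ i : Fin n, ∑ p ∈ D, (if p ≤ i.val then 1 else 0)
    from rfl, Finset.sum_comm]
  apply Finset.sum_congr rfl
  intro p hp
  rw [Fin.sum_univ_eq_sum_range (fun k => if p ≤ k then (1:ℕ) else 0) n, ← Finset.card_filter]
  have : (Finset.range n).filter (fun k => p ≤ k) = Finset.Ico p n := by
    ext k; simp only [Finset.mem_filter, Finset.mem_range, Finset.mem_Ico]; omega
  rw [this, Nat.card_Ico]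

lemma shiftF_le {n : ℕ} {D : Finset ℕ} (hD : D ⊆ Finset.Icc 1 (n-1)) {a : Fin n → ℕ}
    (ha : okD n D a) : ∀ (k : ℕ) (hk : k < n), shiftF D n ⟨k, hk⟩ ≤ a ⟨k, hk⟩ := by
  intro k
  induction k with
  | zero => intro hk; rw [shiftF_zero hD hk]; exact Nat.zero_le _
  | succ k ih =>
    intro hk
    rw [shiftF_succ D k hk]
    have h1 := ih (Nat.lt_of_succ_lt hk)
    have h2 := ha k hk
    by_cases hmem : (k+1) ∈ D
    · rw [if_pos hmem]; have := h2.2 hmem; omega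
    · rw [if_neg hmem]; have := h2.1; omega

lemma cnt_shift {n : ℕ} {D : Finset ℕ} (hD : D ⊆ Finset.Icc 1 (n-1)) (m : ℕ) :
    cnt n D m = if (∑ p ∈ D, (n - p)) ≤ m then cnt n ∅ (m - ∑ p ∈ D, (n - p)) else 0 := by
  set c := ∑ p ∈ D, (n - p) with hc
  rcases le_or_gt c m with h | h
  · rw [if_pos h, cnt, cnt]
    apply Nat.card_congr
    refine { toFun := fun x => ⟨fun i => x.1 i - shiftF D n i, ?_, ?_⟩,
             invFun := fun y => ⟨fun i => y.1 i + shiftF D n i, ?_, ?_⟩,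
             left_inv := ?_, right_inv := ?_ }
    · apply okD_empty_adj
      intro i hi
      show x.1 ⟨i, Nat.lt_of_succ_lt hi⟩ - shiftF D n ⟨i, Nat.lt_of_succ_lt hi⟩ ≤
        x.1 ⟨i+1, hi⟩ - shiftF D n ⟨i+1, hi⟩
      rw [shiftF_succ D i hi]
      have h1 := shiftF_le hD x.2.1 i (Nat.lt_of_succ_lt hi)
      have h2 := x.2.1 i hi
      by_cases hmem : (i+1) ∈ D
      · rw [if_pos hmem]; have := h2.2 hmem; omega
      · rw [if_neg hmem]; have := h2.1; omega
    · show (∑ i : Fin n, (x.1 i - shiftF D n i)) = m - c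
      rw [Finset.sum_tsub_distrib _ (fun i _ => shiftF_le hD x.2.1 i.val i.isLt)]
      rw [x.2.2, shiftF_sum hD]
    · intro i hi
      have h2 := (y.2.1 i hi).1
      have hss := shiftF_succ D i hi
      refine ⟨?_, fun hmem => ?_⟩
      · show y.1 ⟨i, Nat.lt_of_succ_lt hi⟩ + shiftF D n ⟨i, Nat.lt_of_succ_lt hi⟩ ≤
          y.1 ⟨i+1, hi⟩ + shiftF D n ⟨i+1, hi⟩
        rw [hss]; split_ifs <;> omega
      · show y.1 ⟨i, Nat.lt_of_succ_lt hi⟩ + shiftF D n ⟨i, Nat.lt_of_succ_lt hi⟩ <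
          y.1 ⟨i+1, hi⟩ + shiftF D n ⟨i+1, hi⟩
        rw [hss, if_pos hmem]; omega
    · show (∑ i : Fin n, (y.1 i + shiftF D n i)) = m
      rw [Finset.sum_add_distrib, y.2.2, shiftF_sum hD, ← hc]
      omega
    · intro x
      apply Subtype.ext; funext i
      show (x.1 i - shiftF D n i) + shiftF D n i = x.1 i
      have h1 := shiftF_le hD x.2.1 i.val i.isLt
      have he : x.1 ⟨i.val, i.isLt⟩ = x.1 i := rfl
      have he2 : shiftF D n ⟨i.val, i.isLt⟩ = shiftF D n i := rfl
      omega
    · intro y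
      apply Subtype.ext; funext i
      show (y.1 i + shiftF D n i) - shiftF D n i = y.1 i
      omega
  · rw [if_neg (by omega)]
    have : IsEmpty {a : Fin n → ℕ // okD n D a ∧ ∑ i, a i = m} := by
      constructor
      rintro ⟨a, ha, hsum⟩
      have hle : ∑ i : Fin n, shiftF D n i ≤ ∑ i : Fin n, a i :=
        Finset.sum_le_sum (fun i _ => shiftF_le hD ha i.val i.isLt)
      rw [shiftF_sum hD, hsum, ← hc] at hle
      omega
    exact Nat.card_of_isEmpty

lemma Fser_shift {n : ℕ} {D : Finset ℕ} (hD : D ⊆ Finset.Icc 1 (n-1)) :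
    Fser n D = PowerSeries.X ^ (∑ p ∈ D, (n - p)) * Fser n ∅ := by
  ext m
  rw [PowerSeries.coeff_X_pow_mul', Fser, PowerSeries.coeff_mk, cnt_shift hD m]
  split
  · rw [Fser, PowerSeries.coeff_mk]
  · simp

/-- Lemma A : `(q;q)_n ⬝ F_D = q^{∑_{i ∈ D} (n-i)}`. -/
lemma poch_mul_Fser {n : ℕ} {D : Finset ℕ} (hD : D ⊆ Finset.Icc 1 (n-1)) :
    pochPS n * Fser n D = PowerSeries.X ^ (∑ p ∈ D, (n - p)) := by
  rw [Fser_shift hD, mul_left_comm, poch_mul_Fser_empty, mul_one]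

/-! ### Embedding single-variable power series into two variables -/

/-- coefficient-level embedding of a one-variable series into variable `i`. -/
def phiFun (i : Fin 2) (f : PowerSeries ℤ) : MvPowerSeries (Fin 2) ℤ :=
  fun d => if d = Finsupp.single i (d i) then PowerSeries.coeff (d i) f else 0

lemma coeff_phiFun (i : Fin 2) (f : PowerSeries ℤ) (d : Fin 2 →₀ ℕ) :
    MvPowerSeries.coeff d (phiFun i f) =
      if d = Finsupp.single i (d i) then PowerSeries.coeff (d i) f else 0 := rfl

lemma phiFun_one (i : Fin 2) : phiFun i 1 = 1 := by
  ext d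
  rw [coeff_phiFun, MvPowerSeries.coeff_one, PowerSeries.coeff_one]
  rcases eq_or_ne d 0 with rfl | hd
  · rw [if_pos (by simp), if_pos rfl, if_pos (by simp)]
  · rw [if_neg hd]
    split
    · rw [if_neg (by
        intro h0
        apply hd
        rw [‹d = Finsupp.single i (d i)›, h0, Finsupp.single_zero])]
    · rfl

lemma phiFun_mul (i : Fin 2) (f g : PowerSeries ℤ) :
    phiFun i (f * g) = phiFun i f * phiFun i g := by
  ext d
  rw [coeff_phiFun, MvPowerSeries.coeff_mul]
  by_cases hd : d = Finsupp.single i (d i)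
  · rw [if_pos hd]
    conv_rhs => rw [hd]
    rw [Finsupp.antidiagonal_single, Finset.sum_map]
    simp only [Function.Embedding.coe_prodMap, Function.Embedding.coeFn_mk, Prod.map_fst,
      Prod.map_snd]
    have hterm : ∀ p : ℕ × ℕ,
        MvPowerSeries.coeff (Finsupp.single i p.1) (phiFun i f) *
          MvPowerSeries.coeff (Finsupp.single i p.2) (phiFun i g) =
        PowerSeries.coeff p.1 f * PowerSeries.coeff p.2 g := by
      intro p
      rw [coeff_phiFun, coeff_phiFun, Finsupp.single_eq_same, Finsupp.single_eq_same,
        if_pos rfl, if_pos rfl]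
    rw [Finset.sum_congr rfl (fun p _ => hterm p), PowerSeries.coeff_mul]
  · rw [if_neg hd]
    symm
    apply Finset.sum_eq_zero
    intro p hp
    have hsum : p.1 + p.2 = d := Finset.HasAntidiagonal.mem_antidiagonal.mp hp
    rw [coeff_phiFun, coeff_phiFun]
    by_cases h1 : p.1 = Finsupp.single i (p.1 i)
    · by_cases h2 : p.2 = Finsupp.single i (p.2 i)
      · exfalso
        apply hd
        have : d = Finsupp.single i (p.1 i + p.2 i) := by
          rw [← hsum, Finsupp.single_add]
          conv_lhs => rw [h1, h2]
        rw [this, Finsupp.single_eq_same]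
      · rw [if_neg h2, mul_zero]
    · rw [if_neg h1, zero_mul]

lemma phiFun_add (i : Fin 2) (f g : PowerSeries ℤ) :
    phiFun i (f + g) = phiFun i f + phiFun i g := by
  ext d
  rw [map_add, coeff_phiFun, coeff_phiFun, coeff_phiFun, map_add]
  split <;> simp

/-- the embedding as a ring homomorphism. -/
def phi (i : Fin 2) : PowerSeries ℤ →+* MvPowerSeries (Fin 2) ℤ where
  toFun := phiFun i
  map_zero' := by
    ext d
    rw [coeff_phiFun, map_zero, map_zero, ite_self]
  map_add' := phiFun_add i
  map_one' := phiFun_one i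
  map_mul' := phiFun_mul i

lemma coeff_phi (i : Fin 2) (f : PowerSeries ℤ) (d : Fin 2 →₀ ℕ) :
    MvPowerSeries.coeff d (phi i f) =
      if d = Finsupp.single i (d i) then PowerSeries.coeff (d i) f else 0 := rfl

lemma phi_X (i : Fin 2) : phi i PowerSeries.X = MvPowerSeries.X i := by
  ext d
  rw [coeff_phi, MvPowerSeries.coeff_X]
  by_cases h1 : d = Finsupp.single i 1
  · rw [if_pos h1]
    have hdi : d i = 1 := by rw [h1, Finsupp.single_eq_same]
    rw [if_pos (by rw [hdi, ← h1]), hdi, PowerSeries.coeff_one_X]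
  · rw [if_neg h1]
    split
    · rw [PowerSeries.coeff_X]
      rw [if_neg (by
        intro hdi
        apply h1
        rw [‹d = Finsupp.single i (d i)›, hdi])]
    · rfl

lemma coeff_phi_mul (f g : PowerSeries ℤ) (d : Fin 2 →₀ ℕ) :
    MvPowerSeries.coeff d (phi 0 f * phi 1 g) =
      PowerSeries.coeff (d 0) f * PowerSeries.coeff (d 1) g := by
  rw [MvPowerSeries.coeff_mul]
  have hdecomp : Finsupp.single (0 : Fin 2) (d 0) + Finsupp.single (1 : Fin 2) (d 1) = d := by
    ext j
    fin_cases j <;> simp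
  rw [Finset.sum_eq_single (Finsupp.single (0 : Fin 2) (d 0), Finsupp.single (1 : Fin 2) (d 1))]
  · have h1 : MvPowerSeries.coeff (Finsupp.single (0:Fin 2) (d 0)) (phi 0 f) =
        PowerSeries.coeff (d 0) f := by
      rw [show MvPowerSeries.coeff (Finsupp.single (0:Fin 2) (d 0)) (phi 0 f) =
        (phiFun 0 f) (Finsupp.single (0:Fin 2) (d 0)) from rfl, phiFun]
      rw [Finsupp.single_eq_same, if_pos rfl]
    have h2 : MvPowerSeries.coeff (Finsupp.single (1:Fin 2) (d 1)) (phi 1 g) =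
        PowerSeries.coeff (d 1) g := by
      rw [show MvPowerSeries.coeff (Finsupp.single (1:Fin 2) (d 1)) (phi 1 g) =
        (phiFun 1 g) (Finsupp.single (1:Fin 2) (d 1)) from rfl, phiFun]
      rw [Finsupp.single_eq_same, if_pos rfl]
    rw [h1, h2]
  · intro p hp hne
    have hsum : p.1 + p.2 = d := Finset.HasAntidiagonal.mem_antidiagonal.mp hp
    have e1 : MvPowerSeries.coeff p.1 (phi 0 f) =
        if p.1 = Finsupp.single 0 (p.1 0) then PowerSeries.coeff (p.1 0) f else 0 := rfl
    have e2 : MvPowerSeries.coeff p.2 (phi 1 g) =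
        if p.2 = Finsupp.single 1 (p.2 1) then PowerSeries.coeff (p.2 1) g else 0 := rfl
    rw [e1, e2]
    by_cases h1 : p.1 = Finsupp.single 0 (p.1 0)
    · by_cases h2 : p.2 = Finsupp.single 1 (p.2 1)
      · exfalso
        apply hne
        have hv0 : p.1 0 = d 0 := by
          rw [← hsum]
          have : p.2 0 = 0 := by rw [h2]; simp [Finsupp.single_apply]
          simp [this]
        have hv1 : p.2 1 = d 1 := by
          rw [← hsum]
          have : p.1 1 = 0 := by rw [h1]; simp [Finsupp.single_apply]
          simp [this]
        ext1
        · rw [h1, hv0]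
        · rw [h2, hv1]
      · rw [if_neg h2, mul_zero]
    · rw [if_neg h1, zero_mul]
  · intro habs
    exfalso
    exact habs (Finset.HasAntidiagonal.mem_antidiagonal.mpr hdecomp)

lemma pochOne_eq (n : ℕ) (i : Fin 2) : pochOne n i = phi i (pochPS n) := by
  rw [pochPS, map_prod]
  apply Finset.prod_congr rfl
  intro j _
  rw [map_sub, map_one, map_pow, phi_X]

lemma pochAll_eq (n : ℕ) : pochAll n 2 = phi 0 (pochPS n) * phi 1 (pochPS n) := by
  rw [pochAll, Fin.prod_univ_two, pochOne_eq, pochOne_eq]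

/-! ### Lexicographic order on `Seq 2`, index utilities -/

lemma seq2_eq_iff (u v : Seq 2) : u = v ↔ (u 0 = v 0 ∧ u 1 = v 1) := by
  constructor
  · rintro rfl; exact ⟨rfl, rfl⟩
  · rintro ⟨h0, h1⟩
    funext j
    fin_cases j
    · exact h0
    · exact h1

lemma lexLt_iff (u v : Seq 2) :
    lexLt u v ↔ (u 0 < v 0 ∨ (u 0 = v 0 ∧ u 1 < v 1)) := by
  constructor
  · rintro ⟨i, hji, hi⟩
    rcases i with ⟨iv, hiv⟩
    interval_cases iv
    · left; exact hi
    · right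
      exact ⟨hji 0 (by rw [Fin.lt_def]; norm_num), hi⟩
  · rintro (h | ⟨h1, h2⟩)
    · exact ⟨0, fun j hj => absurd hj (Fin.not_lt_zero j), h⟩
    · refine ⟨1, fun j hj => ?_, h2⟩
      have hj0 : j = 0 := (Fin.lt_one_iff j).mp hj
      rw [hj0]; exact h1

lemma lexLe_iff (u v : Seq 2) :
    lexLe u v ↔ (u 0 < v 0 ∨ (u 0 = v 0 ∧ u 1 ≤ v 1)) := by
  rw [lexLe, lexLt_iff, seq2_eq_iff]
  constructor
  · rintro ((h | ⟨h1, h2⟩) | ⟨h1, h2⟩)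
    · exact Or.inl h
    · exact Or.inr ⟨h1, le_of_lt h2⟩
    · exact Or.inr ⟨h1, le_of_eq h2⟩
  · rintro (h | ⟨h1, h2⟩)
    · exact Or.inl (Or.inl h)
    · rcases lt_or_eq_of_le h2 with h3 | h3
      · exact Or.inl (Or.inr ⟨h1, h3⟩)
      · exact Or.inr ⟨h1, h3⟩

lemma pget_mk {n : ℕ} (σ : Equiv.Perm (Fin n)) (i : ℕ) (h : i < n) :
    pget σ (i + 1) = (σ ⟨i, h⟩).val + 1 := by
  rw [pget]
  simp only [Nat.add_sub_cancel]
  rw [dif_pos h]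

lemma sget_mk {n r : ℕ} (S : Fin n → Seq r) (i : ℕ) (h : i < n) :
    sget S (i + 1) = S ⟨i, h⟩ := by
  rw [sget]
  simp only [Nat.add_sub_cancel]
  rw [dif_pos h]

lemma mem_desPerm_iff {n : ℕ} (σ : Equiv.Perm (Fin n)) {i : ℕ} (h : i + 1 < n) :
    (i + 1) ∈ desPerm σ ↔ (σ ⟨i+1, h⟩).val < (σ ⟨i, Nat.lt_of_succ_lt h⟩).val := by
  rw [desPerm, Finset.mem_filter, Finset.mem_Icc]
  rw [show i + 1 + 1 = (i + 1) + 1 from rfl, pget_mk σ (i+1) h,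
    pget_mk σ i (Nat.lt_of_succ_lt h)]
  constructor
  · intro hh; omega
  · intro hh; omega

lemma desPerm_subset {n : ℕ} (σ : Equiv.Perm (Fin n)) :
    desPerm σ ⊆ Finset.Icc 1 (n-1) := Finset.filter_subset _ _

/-- the `condS` predicate, as in the theorem statement. -/
def condS (n : ℕ) (S : Fin n → Seq 2) : Prop :=
  ∀ i ∈ Finset.Icc 1 (n-1), lexLe (sget S i) (sget S (i+1))

lemma condS_iff {n : ℕ} (S : Fin n → Seq 2) :
    condS n S ↔ ∀ (i : ℕ) (h : i + 1 < n),
      lexLe (S ⟨i, Nat.lt_of_succ_lt h⟩) (S ⟨i+1, h⟩) := by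
  constructor
  · intro hS i h
    have hm : i + 1 ∈ Finset.Icc 1 (n-1) := Finset.mem_Icc.mpr ⟨by omega, by omega⟩
    have := hS (i+1) hm
    rwa [sget_mk S i (Nat.lt_of_succ_lt h), show (i+1) + 1 = (i+1) + 1 from rfl,
      sget_mk S (i+1) h] at this
  · intro hS i hi
    rw [Finset.mem_Icc] at hi
    obtain ⟨i', rfl⟩ : ∃ i', i = i' + 1 := ⟨i - 1, by omega⟩
    have h : i' + 1 < n := by omega
    rw [sget_mk S i' (Nat.lt_of_succ_lt h), show (i'+1) + 1 = (i'+1) + 1 from rfl,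
      sget_mk S (i'+1) h]
    exact hS i' h

/-! ### Sorting and standardization -/

lemma okD_strict {n : ℕ} {σ : Equiv.Perm (Fin n)} {c : Fin n → ℕ}
    (hc : okD n (desPerm σ) c) :
    ∀ (k : ℕ) (hk : k < n) (j : ℕ) (hj : j < k),
      c ⟨j, lt_trans hj hk⟩ = c ⟨k, hk⟩ →
        (σ ⟨j, lt_trans hj hk⟩).val < (σ ⟨k, hk⟩).val := by
  intro k
  induction k with
  | zero => intro hk j hj; omega
  | succ k ih =>
    intro hk j hj heq
    have hkn : k < n := Nat.lt_of_succ_lt hk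
    have hmono : c ⟨j, by omega⟩ ≤ c ⟨k, hkn⟩ := okD_le hc k hkn j (by omega)
    have hadj := (hc k hk).1
    have heq2 : c ⟨k, hkn⟩ = c ⟨k+1, hk⟩ := by omega
    have heq1 : c ⟨j, by omega⟩ = c ⟨k, hkn⟩ := by omega
    have hnotdes : (k+1) ∉ desPerm σ := by
      intro hmem
      have := (hc k hk).2 hmem
      omega
    rw [mem_desPerm_iff σ hk] at hnotdes
    have hne : (σ ⟨k, hkn⟩).val ≠ (σ ⟨k+1, hk⟩).val := by
      intro hcontra
      have h2 : σ ⟨k, hkn⟩ = σ ⟨k+1, hk⟩ := Fin.ext hcontra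
      have := σ.injective h2
      rw [Fin.mk.injEq] at this
      omega
    have hlt : (σ ⟨k, hkn⟩).val < (σ ⟨k+1, hk⟩).val := by omega
    rcases Nat.lt_or_ge j k with hjk | hjk
    · have := ih hkn j hjk heq1
      omega
    · have : j = k := by omega
      subst this
      omega

lemma sort_eq {n : ℕ} (σ : Equiv.Perm (Fin n)) (c : Fin n → ℕ)
    (hc : okD n (desPerm σ) c) : Tuple.sort (c ∘ ⇑σ⁻¹) = σ := by
  symm
  rw [Tuple.eq_sort_iff]
  constructor
  · intro p q hpq
    show (c ∘ ⇑σ⁻¹) (σ p) ≤ (c ∘ ⇑σ⁻¹) (σ q)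
    simp only [Function.comp_apply, Equiv.Perm.coe_inv, Equiv.symm_apply_apply]
    exact okD_le hc q.val q.isLt p.val hpq
  · intro p q hpq heq
    simp only [Function.comp_apply, Equiv.Perm.coe_inv, Equiv.symm_apply_apply] at heq
    exact okD_strict hc q.val q.isLt p.val hpq heq

lemma okD_sorted {n : ℕ} (b : Fin n → ℕ) :
    okD n (desPerm (Tuple.sort b)) (b ∘ ⇑(Tuple.sort b)) := by
  intro i hi
  have hmono := Tuple.monotone_sort b
  have hstab := (Tuple.eq_sort_iff.mp (rfl : Tuple.sort b = Tuple.sort b)).2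
  have hle : (b ∘ ⇑(Tuple.sort b)) ⟨i, Nat.lt_of_succ_lt hi⟩ ≤
      (b ∘ ⇑(Tuple.sort b)) ⟨i+1, hi⟩ := hmono (by rw [Fin.mk_le_mk]; omega)
  refine ⟨hle, fun hmem => ?_⟩
  rw [mem_desPerm_iff _ hi] at hmem
  rcases lt_or_eq_of_le hle with h | h
  · exact h
  · exfalso
    have := hstab ⟨i, Nat.lt_of_succ_lt hi⟩ ⟨i+1, hi⟩ (by rw [Fin.mk_lt_mk]; omega) h
    rw [Fin.lt_def] at this
    omega

lemma b_desc {n : ℕ} {σ : Equiv.Perm (Fin n)} {c : Fin n → ℕ}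
    (hc : okD n (desPerm σ) c) {i : ℕ} (h : i + 1 < n) :
    (c (σ⁻¹ ⟨i+1, h⟩) < c (σ⁻¹ ⟨i, Nat.lt_of_succ_lt h⟩)) ↔ (i+1) ∈ desPerm σ⁻¹ := by
  rw [mem_desPerm_iff σ⁻¹ h]
  set p := σ⁻¹ ⟨i+1, h⟩ with hp
  set q := σ⁻¹ ⟨i, Nat.lt_of_succ_lt h⟩ with hq
  have hep : c ⟨p.val, p.isLt⟩ = c p := rfl
  have heq' : c ⟨q.val, q.isLt⟩ = c q := rfl
  constructor
  · intro hlt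
    by_contra hge
    have hle2 : c ⟨p.val, p.isLt⟩ ≤ c ⟨q.val, q.isLt⟩ →
        c p ≤ c q := by rw [hep, heq']; exact id
    -- q.val ≤ p.val, so c q ≤ c p
    have : c ⟨q.val, q.isLt⟩ ≤ c ⟨p.val, p.isLt⟩ := okD_le hc p.val p.isLt q.val (by omega)
    rw [hep, heq'] at this
    omega
  · intro hlt
    have hle : c ⟨p.val, p.isLt⟩ ≤ c ⟨q.val, q.isLt⟩ := okD_le hc q.val q.isLt p.val (by omega)
    rw [hep, heq'] at hle
    rcases lt_or_eq_of_le hle with h1 | h1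
    · exact h1
    · exfalso
      have hs := okD_strict hc q.val q.isLt p.val (by omega) (by rw [hep, heq']; exact h1)
      have e1 : σ ⟨p.val, p.isLt⟩ = σ p := rfl
      have e2 : σ ⟨q.val, q.isLt⟩ = σ q := rfl
      rw [e1, e2] at hs
      have hsp : σ p = ⟨i+1, h⟩ := by rw [hp]; exact σ.apply_symm_apply _
      have hsq : σ q = ⟨i, Nat.lt_of_succ_lt h⟩ := by rw [hq]; exact σ.apply_symm_apply _
      rw [hsp, hsq] at hs
      simp only at hs
      omega

lemma condS_iff_okD {n : ℕ} (S : Fin n → Seq 2) (σ : Equiv.Perm (Fin n))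
    (hdes : ∀ (i : ℕ) (h : i + 1 < n),
      (S ⟨i+1, h⟩ 1 < S ⟨i, Nat.lt_of_succ_lt h⟩ 1) ↔ (i+1) ∈ desPerm σ⁻¹) :
    condS n S ↔ okD n (desPerm σ⁻¹) (fun i => S i 0) := by
  rw [condS_iff]
  constructor
  · intro h i hi
    have hl := (lexLe_iff _ _).mp (h i hi)
    have hd := hdes i hi
    constructor
    · show S ⟨i, Nat.lt_of_succ_lt hi⟩ 0 ≤ S ⟨i+1, hi⟩ 0
      rcases hl with h1 | ⟨h1, h2⟩ <;> omega
    · intro hmem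
      show S ⟨i, Nat.lt_of_succ_lt hi⟩ 0 < S ⟨i+1, hi⟩ 0
      have hb : S ⟨i+1, hi⟩ 1 < S ⟨i, Nat.lt_of_succ_lt hi⟩ 1 := hd.mpr hmem
      rcases hl with h1 | ⟨h1, h2⟩ <;> omega
  · intro h i hi
    apply (lexLe_iff _ _).mpr
    have h1 := (h i hi).1
    have h2 := (h i hi).2
    simp only at h1 h2
    have hd := hdes i hi
    rcases Nat.lt_or_ge (S ⟨i, Nat.lt_of_succ_lt hi⟩ 0) (S ⟨i+1, hi⟩ 0) with hlt | hge
    · exact Or.inl hlt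
    · refine Or.inr ⟨by omega, ?_⟩
      by_contra hb
      have hmem : (i+1) ∈ desPerm σ⁻¹ := hd.mp (by omega)
      have := h2 hmem
      omega

lemma vec2_one (x y : ℕ) : (![x, y] : Seq 2) 1 = y := rfl
lemma vec2_zero (x y : ℕ) : (![x, y] : Seq 2) 0 = x := rfl

lemma des_iff_of_sort {n : ℕ} (b : Fin n → ℕ) {i : ℕ} (h : i + 1 < n) :
    (b ⟨i+1, h⟩ < b ⟨i, Nat.lt_of_succ_lt h⟩) ↔ (i+1) ∈ desPerm (Tuple.sort b)⁻¹ := by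
  have hb1 : b ⟨i+1, h⟩ =
      (b ∘ ⇑(Tuple.sort b)) ((Tuple.sort b)⁻¹ ⟨i+1, h⟩) := by simp
  have hb2 : b ⟨i, Nat.lt_of_succ_lt h⟩ =
      (b ∘ ⇑(Tuple.sort b)) ((Tuple.sort b)⁻¹ ⟨i, Nat.lt_of_succ_lt h⟩) := by simp
  rw [hb1, hb2]
  exact b_desc (okD_sorted b) h

lemma master_aux_a {n : ℕ} (S : Fin n → Seq 2) (hS : condS n S) :
    okD n (desPerm (Tuple.sort (fun i => S i 1))⁻¹) (fun i => S i 0) :=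
  (condS_iff_okD S (Tuple.sort (fun i => S i 1))
    (fun i h => des_iff_of_sort (fun i => S i 1) h)).mp hS

lemma master_aux_cond {n : ℕ} (σ : Equiv.Perm (Fin n)) (c a : Fin n → ℕ)
    (hc : okD n (desPerm σ) c) (ha : okD n (desPerm σ⁻¹) a) :
    condS n (fun i => ![a i, c (σ⁻¹ i)]) := by
  apply (condS_iff_okD (fun i => ![a i, c (σ⁻¹ i)]) σ (fun i h => b_desc hc h)).mpr
  exact ha

/-- the master bijection: decompose `S` into its standardizing permutation and
two sorted sequences. -/
def master (n : ℕ) : {S : Fin n → Seq 2 // condS n S} ≃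
    (Σ σ : Equiv.Perm (Fin n),
      {c : Fin n → ℕ // okD n (desPerm σ) c} ×
        {a : Fin n → ℕ // okD n (desPerm σ⁻¹) a}) where
  toFun X := ⟨Tuple.sort (fun i => X.1 i 1),
    ⟨(fun i => X.1 i 1) ∘ ⇑(Tuple.sort (fun i => X.1 i 1)), okD_sorted _⟩,
    ⟨fun i => X.1 i 0, master_aux_a X.1 X.2⟩⟩
  invFun Y := ⟨fun i => ![Y.2.2.1 i, Y.2.1.1 (Y.1⁻¹ i)],
    master_aux_cond Y.1 Y.2.1.1 Y.2.2.1 Y.2.1.2 Y.2.2.2⟩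
  left_inv := by
    intro X
    apply Subtype.ext
    funext i
    funext k
    fin_cases k
    · rfl
    · show ((fun j => X.1 j 1) ∘ ⇑(Tuple.sort (fun j => X.1 j 1)))
        ((Tuple.sort (fun j => X.1 j 1))⁻¹ i) = X.1 i 1
      simp
  right_inv := by
    rintro ⟨σ, ⟨c, hc⟩, ⟨a, ha⟩⟩
    have key : ∀ (τ : Equiv.Perm (Fin n)) (_ : τ = σ)
        (x : {c' : Fin n → ℕ // okD n (desPerm τ) c'} ×
          {a' : Fin n → ℕ // okD n (desPerm τ⁻¹) a'}),
        x.1.1 = c → x.2.1 = a →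
        (⟨τ, x⟩ : Σ σ' : Equiv.Perm (Fin n),
          {c' : Fin n → ℕ // okD n (desPerm σ') c'} ×
            {a' : Fin n → ℕ // okD n (desPerm σ'⁻¹) a'}) = ⟨σ, ⟨c, hc⟩, ⟨a, ha⟩⟩ := by
      rintro τ rfl x h1 h2
      congr 1
      exact Prod.ext (Subtype.ext h1) (Subtype.ext h2)
    apply key
    · show Tuple.sort (c ∘ ⇑σ⁻¹) = σ
      exact sort_eq σ c hc
    · show (c ∘ ⇑σ⁻¹) ∘ ⇑(Tuple.sort (c ∘ ⇑σ⁻¹)) = c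
      rw [sort_eq σ c hc]
      funext i
      simp
    · rfl

/-! ### Counting -/

lemma nat_card_sigma {ι : Type*} [Fintype ι] (β : ι → Type*) [∀ i, Finite (β i)] :
    Nat.card ((i : ι) × β i) = ∑ i, Nat.card (β i) := by
  have : ∀ i, Fintype (β i) := fun i => Fintype.ofFinite _
  simp only [Nat.card_eq_fintype_card]
  exact Fintype.card_sigma

def sigmaSubtypeEquiv {ι : Type*} {β : ι → Type*} (p : ∀ i, β i → Prop) :
    {y : Σ i, β i // p y.1 y.2} ≃ Σ i, {b : β i // p i b} where
  toFun y := ⟨y.1.1, y.1.2, y.2⟩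
  invFun z := ⟨⟨z.1, z.2.1⟩, z.2.2⟩
  left_inv y := rfl
  right_inv z := rfl

def prodSubtypeEquiv {α β : Type*} {p : α → Prop} {q : β → Prop} (r : α → Prop)
    (s : β → Prop) :
    {w : {a // p a} × {b // q b} // r w.1.1 ∧ s w.2.1} ≃
      ({a // p a ∧ r a} × {b // q b ∧ s b}) where
  toFun w := (⟨w.1.1.1, w.1.1.2, w.2.1⟩, ⟨w.1.2.1, w.1.2.2, w.2.2⟩)
  invFun z := ⟨(⟨z.1.1, z.1.2.1⟩, ⟨z.2.1, z.2.2.1⟩), z.1.2.2, z.2.2.2⟩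
  left_inv w := rfl
  right_inv z := rfl

lemma master_sum_c {n : ℕ} (X : {S : Fin n → Seq 2 // condS n S}) :
    ∑ i, ((master n X).2.1.1 : Fin n → ℕ) i = ∑ j, X.1 j 1 := by
  exact Equiv.sum_comp (Tuple.sort (fun i => X.1 i 1)) (fun i => X.1 i 1)

lemma master_sum_a {n : ℕ} (X : {S : Fin n → Seq 2 // condS n S}) :
    ∑ i, ((master n X).2.2.1 : Fin n → ℕ) i = ∑ j, X.1 j 0 := rfl

lemma count1 (n : ℕ) (d1 d2 : ℕ) :
    Nat.card {S : Fin n → Seq 2 //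
        condS n S ∧ (∑ j, S j 1 = d1 ∧ ∑ j, S j 0 = d2)} =
      ∑ σ : Equiv.Perm (Fin n), cnt n (desPerm σ) d1 * cnt n (desPerm σ⁻¹) d2 := by
  have e1 := (Equiv.subtypeSubtypeEquivSubtypeInter (condS n)
    (fun S : Fin n → Seq 2 => ∑ j, S j 1 = d1 ∧ ∑ j, S j 0 = d2)).symm
  have e2 := (master n).subtypeEquiv
    (p := fun X : {S : Fin n → Seq 2 // condS n S} =>
      (∑ j, X.1 j 1 = d1 ∧ ∑ j, X.1 j 0 = d2))
    (q := fun Y => (∑ i, (Y.2.1.1 : Fin n → ℕ) i = d1 ∧ ∑ i, (Y.2.2.1 : Fin n → ℕ) i = d2))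
    (fun X => by simp only [master_sum_c X, master_sum_a X])
  have e3 := sigmaSubtypeEquiv (ι := Equiv.Perm (Fin n))
    (β := fun σ => {c : Fin n → ℕ // okD n (desPerm σ) c} ×
      {a : Fin n → ℕ // okD n (desPerm σ⁻¹) a})
    (fun σ x => ∑ i, (x.1.1 : Fin n → ℕ) i = d1 ∧ ∑ i, (x.2.1 : Fin n → ℕ) i = d2)
  have e4 : ∀ σ : Equiv.Perm (Fin n), _ ≃ _ := fun σ =>
    prodSubtypeEquiv (p := okD n (desPerm σ)) (q := okD n (desPerm σ⁻¹))
      (fun c => ∑ i, c i = d1) (fun a => ∑ i, a i = d2)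
  haveI : ∀ σ : Equiv.Perm (Fin n),
      Finite ({c : Fin n → ℕ // okD n (desPerm σ) c ∧ ∑ i, c i = d1} ×
        {a : Fin n → ℕ // okD n (desPerm σ⁻¹) a ∧ ∑ i, a i = d2}) := fun σ => by
    haveI := finite_cnt n d1 (desPerm σ)
    haveI := finite_cnt n d2 (desPerm σ⁻¹)
    infer_instance
  rw [Nat.card_congr (((e1.trans e2).trans e3).trans (Equiv.sigmaCongrRight e4)),
    nat_card_sigma]
  exact Finset.sum_congr rfl (fun σ _ => by rw [Nat.card_prod]; rfl)

/-- split a sum-constrained pair along the antidiagonal. -/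
def pairSumEquiv (n m : ℕ) (D1 D2 : Finset ℕ) :
    {w : {c : Fin n → ℕ // okD n D1 c} × {a : Fin n → ℕ // okD n D2 a} //
        (∑ i, (w.1.1 : Fin n → ℕ) i) + (∑ i, (w.2.1 : Fin n → ℕ) i) = m} ≃
      Σ p : {p : ℕ × ℕ // p ∈ Finset.HasAntidiagonal.antidiagonal m},
        ({c : Fin n → ℕ // okD n D1 c ∧ ∑ i, c i = p.1.1} ×
          {a : Fin n → ℕ // okD n D2 a ∧ ∑ i, a i = p.1.2}) where
  toFun w := ⟨⟨(∑ i, (w.1.1 : Fin n → ℕ) i, ∑ i, (w.1.2 : Fin n → ℕ) i),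
      Finset.HasAntidiagonal.mem_antidiagonal.mpr w.2⟩,
    (⟨w.1.1.1, w.1.1.2, rfl⟩, ⟨w.1.2.1, w.1.2.2, rfl⟩)⟩
  invFun z := ⟨(⟨z.2.1.1, z.2.1.2.1⟩, ⟨z.2.2.1, z.2.2.2.1⟩), by
    have hp := Finset.HasAntidiagonal.mem_antidiagonal.mp z.1.2
    show (∑ i, (z.2.1.1 : Fin n → ℕ) i) + (∑ i, (z.2.2.1 : Fin n → ℕ) i) = m
    rw [z.2.1.2.2, z.2.2.2.2]
    exact hp⟩
  left_inv w := rfl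
  right_inv := by
    rintro ⟨⟨⟨p1, p2⟩, hp⟩, ⟨c, hc, hc2⟩, ⟨a, ha, ha2⟩⟩
    dsimp only at hc2 ha2
    subst hc2
    subst ha2
    rfl

lemma card_pair_sum (n m : ℕ) (D1 D2 : Finset ℕ) :
    Nat.card {w : {c : Fin n → ℕ // okD n D1 c} × {a : Fin n → ℕ // okD n D2 a} //
        (∑ i, (w.1.1 : Fin n → ℕ) i) + (∑ i, (w.2.1 : Fin n → ℕ) i) = m} =
      ∑ p ∈ Finset.HasAntidiagonal.antidiagonal m, cnt n D1 p.1 * cnt n D2 p.2 := by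
  haveI : ∀ p : {p : ℕ × ℕ // p ∈ Finset.HasAntidiagonal.antidiagonal m},
      Finite ({c : Fin n → ℕ // okD n D1 c ∧ ∑ i, c i = p.1.1} ×
        {a : Fin n → ℕ // okD n D2 a ∧ ∑ i, a i = p.1.2}) := fun p => by
    haveI := finite_cnt n p.1.1 D1
    haveI := finite_cnt n p.1.2 D2
    infer_instance
  rw [Nat.card_congr (pairSumEquiv n m D1 D2), nat_card_sigma]
  rw [← Finset.sum_coe_sort (Finset.HasAntidiagonal.antidiagonal m)
    (fun p => cnt n D1 p.1 * cnt n D2 p.2)]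
  exact Finset.sum_congr rfl (fun p _ => by rw [Nat.card_prod]; rfl)

lemma count2 (n m : ℕ) :
    Nat.card {S : Fin n → Seq 2 // condS n S ∧ ∑ j, ∑ k, S j k = m} =
      ∑ σ : Equiv.Perm (Fin n),
        ∑ p ∈ Finset.HasAntidiagonal.antidiagonal m, cnt n (desPerm σ) p.1 * cnt n (desPerm σ⁻¹) p.2 := by
  have e1 := (Equiv.subtypeSubtypeEquivSubtypeInter (condS n)
    (fun S : Fin n → Seq 2 => ∑ j, ∑ k, S j k = m)).symm
  have e2 := (master n).subtypeEquiv
    (p := fun X : {S : Fin n → Seq 2 // condS n S} => ∑ j, ∑ k, X.1 j k = m)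
    (q := fun Y => (∑ i, (Y.2.1.1 : Fin n → ℕ) i) + (∑ i, (Y.2.2.1 : Fin n → ℕ) i) = m)
    (fun X => by
      have hX : ∑ j, ∑ k, X.1 j k = (∑ j, X.1 j 0) + (∑ j, X.1 j 1) := by
        rw [← Finset.sum_add_distrib]
        exact Finset.sum_congr rfl (fun j _ => Fin.sum_univ_two _)
      simp only [master_sum_c X, master_sum_a X, hX]
      constructor <;> intro <;> omega)
  have e3 := sigmaSubtypeEquiv (ι := Equiv.Perm (Fin n))
    (β := fun σ => {c : Fin n → ℕ // okD n (desPerm σ) c} ×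
      {a : Fin n → ℕ // okD n (desPerm σ⁻¹) a})
    (fun σ x => (∑ i, (x.1.1 : Fin n → ℕ) i) + (∑ i, (x.2.1 : Fin n → ℕ) i) = m)
  haveI : ∀ σ : Equiv.Perm (Fin n),
      Finite {x : {c : Fin n → ℕ // okD n (desPerm σ) c} ×
          {a : Fin n → ℕ // okD n (desPerm σ⁻¹) a} //
        (∑ i, (x.1.1 : Fin n → ℕ) i) + (∑ i, (x.2.1 : Fin n → ℕ) i) = m} := fun σ => by
    haveI : ∀ p : {p : ℕ × ℕ // p ∈ Finset.HasAntidiagonal.antidiagonal m},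
        Finite ({c : Fin n → ℕ // okD n (desPerm σ) c ∧ ∑ i, c i = p.1.1} ×
          {a : Fin n → ℕ // okD n (desPerm σ⁻¹) a ∧ ∑ i, a i = p.1.2}) := fun p => by
      haveI := finite_cnt n p.1.1 (desPerm σ)
      haveI := finite_cnt n p.1.2 (desPerm σ⁻¹)
      infer_instance
    exact Finite.of_equiv _ (pairSumEquiv n m (desPerm σ) (desPerm σ⁻¹)).symm
  rw [Nat.card_congr ((e1.trans e2).trans e3), nat_card_sigma]
  exact Finset.sum_congr rfl (fun σ _ => card_pair_sum n m (desPerm σ) (desPerm σ⁻¹))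

/-! ### Final assembly -/

lemma expOf_eq_iff {n : ℕ} (S : Fin n → Seq 2) (d : Fin 2 →₀ ℕ) :
    expOf S = d ↔ (∑ j, S j 1 = d 0 ∧ ∑ j, S j 0 = d 1) := by
  rw [expOf, Equiv.symm_apply_eq]
  constructor
  · intro h
    constructor
    · have := congrFun h 0
      simpa [show (Fin.rev 0 : Fin 2) = 1 by decide] using this
    · have := congrFun h 1
      simpa [show (Fin.rev 1 : Fin 2) = 0 by decide] using this
  · rintro ⟨h1, h2⟩
    funext i
    fin_cases i
    · simpa [show (Fin.rev 0 : Fin 2) = 1 by decide] using h1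
    · simpa [show (Fin.rev 1 : Fin 2) = 0 by decide] using h2

lemma countSeries_eq (n : ℕ) :
    countSeries (fun S : Fin n → Seq 2 =>
        ∀ i ∈ Finset.Icc 1 (n-1), lexLe (sget S i) (sget S (i+1))) =
      ∑ σ : Equiv.Perm (Fin n),
        phi 0 (Fser n (desPerm σ)) * phi 1 (Fser n (desPerm σ⁻¹)) := by
  ext d
  rw [map_sum]
  have hL : MvPowerSeries.coeff d (countSeries (fun S : Fin n → Seq 2 =>
      ∀ i ∈ Finset.Icc 1 (n-1), lexLe (sget S i) (sget S (i+1)))) =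
      (Nat.card {S : Fin n → Seq 2 //
        (∀ i ∈ Finset.Icc 1 (n-1), lexLe (sget S i) (sget S (i+1))) ∧ expOf S = d} : ℤ) := rfl
  rw [hL]
  have hcard : Nat.card {S : Fin n → Seq 2 //
      (∀ i ∈ Finset.Icc 1 (n-1), lexLe (sget S i) (sget S (i+1))) ∧ expOf S = d} =
      Nat.card {S : Fin n → Seq 2 //
        condS n S ∧ (∑ j, S j 1 = d 0 ∧ ∑ j, S j 0 = d 1)} :=
    Nat.card_congr (Equiv.subtypeEquivRight (fun S =>
      and_congr Iff.rfl (expOf_eq_iff S d)))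
  rw [hcard, count1 n (d 0) (d 1)]
  have hR : ∀ σ : Equiv.Perm (Fin n),
      MvPowerSeries.coeff d (phi 0 (Fser n (desPerm σ)) * phi 1 (Fser n (desPerm σ⁻¹))) =
      ((cnt n (desPerm σ) (d 0) : ℤ) * (cnt n (desPerm σ⁻¹) (d 1) : ℤ)) := fun σ => by
    rw [coeff_phi_mul, Fser, Fser, PowerSeries.coeff_mk, PowerSeries.coeff_mk]
  rw [Finset.sum_congr rfl (fun σ _ => hR σ)]
  push_cast
  rfl

lemma part1 (n : ℕ) :
    pochAll n 2 * countSeries (fun S : Fin n → Seq 2 =>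
        ∀ i ∈ Finset.Icc 1 (n-1), lexLe (sget S i) (sget S (i+1))) =
      ∑ σ : Equiv.Perm (Fin n),
        MvPowerSeries.monomial (R := ℤ)
          (Finsupp.equivFunOnFinite.symm
            (fun i : Fin 2 => if i = 0 then comajP σ⁻¹ else comajP σ)) 1 := by
  rw [pochAll_eq, countSeries_eq, Finset.mul_sum]
  have hterm : ∀ σ : Equiv.Perm (Fin n),
      (phi 0 (pochPS n) * phi 1 (pochPS n)) *
        (phi 0 (Fser n (desPerm σ)) * phi 1 (Fser n (desPerm σ⁻¹))) =
      MvPowerSeries.monomial (R := ℤ)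
        (Finsupp.single 0 (comajP σ) + Finsupp.single 1 (comajP σ⁻¹)) 1 := by
    intro σ
    rw [mul_mul_mul_comm, ← map_mul, ← map_mul, poch_mul_Fser (desPerm_subset σ),
      poch_mul_Fser (desPerm_subset σ⁻¹), map_pow, map_pow, phi_X, phi_X,
      MvPowerSeries.X_pow_eq, MvPowerSeries.X_pow_eq,
      MvPowerSeries.monomial_mul_monomial, one_mul]
    rfl
  rw [Finset.sum_congr rfl (fun σ _ => hterm σ)]
  apply Fintype.sum_equiv (Equiv.inv (Equiv.Perm (Fin n)))
  intro σ
  show _ = MvPowerSeries.monomial (R := ℤ)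
    (Finsupp.equivFunOnFinite.symm
      (fun i : Fin 2 => if i = 0 then comajP (σ⁻¹)⁻¹ else comajP σ⁻¹)) 1
  have hexp : Finsupp.single (0 : Fin 2) (comajP σ) + Finsupp.single (1 : Fin 2) (comajP σ⁻¹) =
      Finsupp.equivFunOnFinite.symm
        (fun i : Fin 2 => if i = 0 then comajP (σ⁻¹)⁻¹ else comajP σ⁻¹) := by
    apply Finsupp.ext
    intro i
    fin_cases i <;>
      simp [Finsupp.single_apply, Finsupp.coe_equivFunOnFinite_symm, inv_inv]
  rw [hexp]

lemma part2 (n : ℕ) :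
    (∏ j ∈ Finset.Icc 1 n, (1 - (PowerSeries.X : PowerSeries ℤ) ^ j)) ^ 2 *
        PowerSeries.mk (fun d =>
          (Nat.card {S : Fin n → Seq 2 //
            (∀ i ∈ Finset.Icc 1 (n-1), lexLe (sget S i) (sget S (i+1))) ∧
            (∑ j : Fin n, ∑ c : Fin 2, S j c) = d} : ℤ)) =
      ∑ σ : Equiv.Perm (Fin n), PowerSeries.monomial (R := ℤ) (comajP σ + comajP σ⁻¹) 1 := by
  have hmk : (PowerSeries.mk (fun d =>
      (Nat.card {S : Fin n → Seq 2 //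
        (∀ i ∈ Finset.Icc 1 (n-1), lexLe (sget S i) (sget S (i+1))) ∧
        (∑ j : Fin n, ∑ c : Fin 2, S j c) = d} : ℤ)) : PowerSeries ℤ) =
      ∑ σ : Equiv.Perm (Fin n), Fser n (desPerm σ) * Fser n (desPerm σ⁻¹) := by
    ext m
    rw [PowerSeries.coeff_mk, map_sum]
    have hR : ∀ σ : Equiv.Perm (Fin n),
        PowerSeries.coeff m (Fser n (desPerm σ) * Fser n (desPerm σ⁻¹)) =
        ((∑ p ∈ Finset.HasAntidiagonal.antidiagonal m,
          cnt n (desPerm σ) p.1 * cnt n (desPerm σ⁻¹) p.2 : ℕ) : ℤ) := fun σ => by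
      rw [PowerSeries.coeff_mul]
      push_cast
      exact Finset.sum_congr rfl (fun p _ => by
        rw [Fser, Fser, PowerSeries.coeff_mk, PowerSeries.coeff_mk])
    rw [Finset.sum_congr rfl (fun σ _ => hR σ)]
    have hcard : Nat.card {S : Fin n → Seq 2 //
        (∀ i ∈ Finset.Icc 1 (n-1), lexLe (sget S i) (sget S (i+1))) ∧
        (∑ j : Fin n, ∑ c : Fin 2, S j c) = m} =
        ∑ σ : Equiv.Perm (Fin n), ∑ p ∈ Finset.HasAntidiagonal.antidiagonal m,
          cnt n (desPerm σ) p.1 * cnt n (desPerm σ⁻¹) p.2 := count2 n m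
    rw [hcard]
    push_cast
    rfl
  rw [hmk, show (∏ j ∈ Finset.Icc 1 n, (1 - (PowerSeries.X : PowerSeries ℤ) ^ j)) = pochPS n
    from rfl, Finset.mul_sum]
  apply Finset.sum_congr rfl
  intro σ _
  have : pochPS n ^ 2 * (Fser n (desPerm σ) * Fser n (desPerm σ⁻¹)) =
      (pochPS n * Fser n (desPerm σ)) * (pochPS n * Fser n (desPerm σ⁻¹)) := by ring
  rw [this, poch_mul_Fser (desPerm_subset σ), poch_mul_Fser (desPerm_subset σ⁻¹),
    ← pow_add, PowerSeries.X_pow_eq]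
  rfl

/-- **Corollary (two-variable case).**
`(q_1;q_1)_n (q_2;q_2)_n h_n[1/((1−q_1)(1−q_2))] = ∑_{σ ∈ S_n} q_1^{comaj(σ⁻¹)} q_2^{comaj(σ)}`,
and consequently `((q;q)_n)² h_n[1/(1−q)²] = ∑_{σ ∈ S_n} q^{comaj(σ) + comaj(σ⁻¹)}`. -/
theorem two_variable_case (n : ℕ) (hn : 1 ≤ n) :
    (pochAll n 2 * countSeries (fun S : Fin n → Seq 2 =>
          ∀ i ∈ Finset.Icc 1 (n-1), lexLe (sget S i) (sget S (i+1))) =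
        ∑ σ : Equiv.Perm (Fin n),
          MvPowerSeries.monomial (R := ℤ)
            (Finsupp.equivFunOnFinite.symm
              (fun i : Fin 2 => if i = 0 then comajP σ⁻¹ else comajP σ)) 1) ∧
    ((∏ j ∈ Finset.Icc 1 n, (1 - (PowerSeries.X : PowerSeries ℤ) ^ j)) ^ 2 *
        PowerSeries.mk (fun d =>
          (Nat.card {S : Fin n → Seq 2 //
            (∀ i ∈ Finset.Icc 1 (n-1), lexLe (sget S i) (sget S (i+1))) ∧
            (∑ j : Fin n, ∑ c : Fin 2, S j c) = d} : ℤ)) =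
      ∑ σ : Equiv.Perm (Fin n), PowerSeries.monomial (R := ℤ) (comajP σ + comajP σ⁻¹) 1) := by
  exact ⟨part1 n, part2 n⟩

end

end RomeroComaj
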